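/- Let $H_1, H_2$ be $n\times n$ complex Hermitian matrices with $H_1$ negative semi-definite, with spectral decomposition $H_1 = Q\Lambda Q^\dagger$, $Q$ unitary, $\Lambda = \mathrm{diag}(\lambda_1,\dots,\lambda_n)$, all $\lambda_i\le 0$. Fix $\Delta t>0$ and $u_0\in\mathbb{C}^n$, $u_0\neq 0$. Define $u^0 := u_0$, $u^{m+1} := \exp(i\Delta t\, H_2)\exp(\Delta t\, H_1)\,u^m$, and $v^0(p) := e^{-|p|}u_0$, $v^{m+1} := \exp(i\Delta t\, H_2)\,\big(T_{\Delta t} v^m\big)$, where $(T_t w)(p) := Q\,\big((Q^\dagger w)_i(p-\lambda_i t)\big)_{i=1}^n$. Then for every $m\ge 0$, $$\frac{\int_0^{\infty}\|v^m(p)\|^2\,dp}{\int_{-\infty}^{\infty}\|v^m(p)\|^2\,dp} = \frac{1}{2}\Big(\frac{\|u^m\|}{\|u_0\|}\Big)^2.$$ -/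

import Mathlib

open Matrix MeasureTheory

/-- The Euclidean norm on `Fin n → ℂ`. -/
noncomputable def euclNorm {n : ℕ} (x : Fin n → ℂ) : ℝ :=
  Real.sqrt (∑ i, ‖x i‖ ^ 2)

lemma euclNorm_sq {n : ℕ} (x : Fin n → ℂ) : euclNorm x ^ 2 = ∑ i, ‖x i‖ ^ 2 :=
  Real.sq_sqrt (Finset.sum_nonneg fun i _ => sq_nonneg _)

lemma euclNorm_smul_real {n : ℕ} (r : ℝ) (x : Fin n → ℂ) :
    euclNorm (r • x) ^ 2 = r ^ 2 * euclNorm x ^ 2 := by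
  rw [euclNorm_sq, euclNorm_sq, Finset.mul_sum]
  refine Finset.sum_congr rfl fun i _ => ?_
  have : (r • x) i = r • x i := rfl
  rw [this, norm_smul]
  simp [mul_pow, Real.norm_eq_abs, sq_abs]

lemma sum_sq_eq_re_dot {n : ℕ} (y : Fin n → ℂ) :
    (∑ i, ‖y i‖ ^ 2 : ℝ) = (star y ⬝ᵥ y).re := by
  simp only [dotProduct, Pi.star_apply]
  rw [Complex.re_sum]
  refine Finset.sum_congr rfl fun i _ => ?_
  rw [Complex.star_def, ← Complex.normSq_eq_conj_mul_self]
  simp [Complex.sq_norm]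

lemma sum_sq_mulVec {n : ℕ} {U : Matrix (Fin n) (Fin n) ℂ}
    (hU : U ∈ Matrix.unitaryGroup (Fin n) ℂ) (x : Fin n → ℂ) :
    ∑ i, ‖U.mulVec x i‖ ^ 2 = ∑ i, ‖x i‖ ^ 2 := by
  rw [sum_sq_eq_re_dot, sum_sq_eq_re_dot]
  congr 1
  rw [Matrix.star_mulVec, Matrix.dotProduct_mulVec, Matrix.vecMul_vecMul]
  have h1 : Uᴴ * U = 1 := by
    have := Matrix.mem_unitaryGroup_iff'.mp hU
    simpa [Matrix.star_eq_conjTranspose] using this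
  rw [h1, Matrix.vecMul_one]

open Set in
lemma integrable_comp_abs' {f : ℝ → ℝ} (hf : IntegrableOn f (Set.Ioi 0)) :
    Integrable fun x => f |x| := by
  have hIoi : IntegrableOn (fun x => f |x|) (Ioi 0) := by
    refine hf.congr_fun (fun x hx => ?_) measurableSet_Ioi
    rw [abs_eq_self.mpr (le_of_lt hx)]
  have hIic : IntegrableOn (fun x ↦ f |x|) (Iic 0) := by
    rw [← Measure.map_neg_eq_self (volume : Measure ℝ)]
    have m : MeasurableEmbedding fun x : ℝ => -x := (Homeomorph.neg ℝ).measurableEmbedding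
    rw [m.integrableOn_map_iff]
    simp_rw [Function.comp_def, abs_neg, neg_preimage, neg_Iic, neg_zero]
    exact Iff.mpr integrableOn_Ici_iff_integrableOn_Ioi hIoi
  have h := hIic.union hIoi
  rwa [Iic_union_Ioi, integrableOn_univ] at h

lemma exp_sq' (a : ℝ) : Real.exp a ^ 2 = Real.exp (2 * a) := by
  rw [sq, ← Real.exp_add]; ring_nf

lemma exp_unitary {n : ℕ} {H : Matrix (Fin n) (Fin n) ℂ} (hH : H.IsHermitian) (t : ℝ) :
    NormedSpace.exp ((Complex.I * (t : ℂ)) • H) ∈ Matrix.unitaryGroup (Fin n) ℂ := by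
  letI : SeminormedRing (Matrix (Fin n) (Fin n) ℂ) := Matrix.linftyOpSemiNormedRing
  letI : NormedRing (Matrix (Fin n) (Fin n) ℂ) := Matrix.linftyOpNormedRing
  letI : NormedAlgebra ℂ (Matrix (Fin n) (Fin n) ℂ) := Matrix.linftyOpNormedAlgebra
  letI hq : NormedAlgebra ℚ (Matrix (Fin n) (Fin n) ℂ) := NormedAlgebra.restrictScalars ℚ ℂ _
  letI hcs : ContinuousStar (Matrix (Fin n) (Fin n) ℂ) :=
    ⟨continuous_id.matrix_map continuous_star |>.matrix_transpose⟩
  refine @NormedSpace.exp_mem_unitary_of_mem_skewAdjoint _ _ hq _ _ hcs _ ?_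
  rw [skewAdjoint.mem_iff, star_smul, Matrix.star_eq_conjTranspose, hH.eq]
  rw [← neg_smul]
  congr 1
  simp [Complex.ext_iff]

lemma exp_smul_spec {n : ℕ} {Q : Matrix (Fin n) (Fin n) ℂ} {l : Fin n → ℝ}
    (hQ : Q ∈ Matrix.unitaryGroup (Fin n) ℂ) (t : ℝ) :
    NormedSpace.exp (t • (Q * Matrix.diagonal (fun i => (l i : ℂ)) * Qᴴ)) =
      Q * Matrix.diagonal (fun i => (Real.exp (t * l i) : ℂ)) * Qᴴ := by
  have hQl : Qᴴ * Q = 1 := by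
    have := Matrix.mem_unitaryGroup_iff'.mp hQ
    simpa [Matrix.star_eq_conjTranspose] using this
  have hQr : Q * Qᴴ = 1 := by
    have := Matrix.mem_unitaryGroup_iff.mp hQ
    simpa [Matrix.star_eq_conjTranspose] using this
  have hinv : Q⁻¹ = Qᴴ := Matrix.inv_eq_left_inv hQl
  have hsm : t • (Q * Matrix.diagonal (fun i => (l i : ℂ)) * Qᴴ)
      = Q * Matrix.diagonal (fun i => ((t * l i : ℝ) : ℂ)) * Qᴴ := by
    rw [← Matrix.smul_mul, ← Matrix.mul_smul, ← Matrix.diagonal_smul]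
    have h1 : (t • fun i => ((l i : ℂ))) = fun i => ((t * l i : ℝ) : ℂ) := by
      funext i; rw [Pi.smul_apply, Complex.real_smul]; push_cast; ring
    rw [h1]
  have hQu : IsUnit Q := ⟨⟨Q, Qᴴ, hQr, hQl⟩, rfl⟩
  rw [hsm, ← hinv, Matrix.exp_conj _ _ hQu, hinv, Matrix.exp_diagonal]
  have h2 : (NormedSpace.exp fun i => ((t * l i : ℝ) : ℂ))
      = fun i => ((Real.exp (t * l i) : ℝ) : ℂ) := by
    rw [Pi.exp_def]
    funext i
    rw [← Complex.exp_eq_exp_ℂ, ← Complex.ofReal_exp]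
  rw [h2]
/-- with `H₁, H₂` Hermitian, `H₁ = Q Λ Q†` negative
semi-definite (all `λᵢ ≤ 0`) and `u₀ ≠ 0`, the exact splitting iterates
`u⁰ = u₀`, `u^{m+1} = exp(iΔt H₂) exp(Δt H₁) uᵐ` and the Schrödingerized
splitting iterates `v⁰(p) = e^{-|p|}u₀`, `v^{m+1} = exp(iΔt H₂)(T_{Δt} vᵐ)`
satisfy, for every `m ≥ 0`,
`(∫_{p≥0} ‖vᵐ(p)‖² dp)/(∫_ℝ ‖vᵐ(p)‖² dp) = (1/2)(‖uᵐ‖/‖u₀‖)²`. -/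
theorem stmt11 {n : ℕ} (H1 H2 Q : Matrix (Fin n) (Fin n) ℂ) (l : Fin n → ℝ)
    (hH1 : H1.IsHermitian) (hH2 : H2.IsHermitian)
    (hQ : Q ∈ Matrix.unitaryGroup (Fin n) ℂ)
    (hspec : H1 = Q * Matrix.diagonal (fun i => (l i : ℂ)) * Qᴴ)
    (hneg : ∀ i, l i ≤ 0)
    (Δt : ℝ) (hΔt : 0 < Δt) (u0 : Fin n → ℂ) (hu0 : u0 ≠ 0)
    (T : ℝ → (ℝ → Fin n → ℂ) → (ℝ → Fin n → ℂ))
    (hT : ∀ (t : ℝ) (w : ℝ → Fin n → ℂ) (p : ℝ),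
      T t w p = Q.mulVec (fun i => Qᴴ.mulVec (w (p - l i * t)) i))
    (u : ℕ → Fin n → ℂ)
    (hu0' : u 0 = u0)
    (hu : ∀ m : ℕ, u (m + 1) =
      (NormedSpace.exp ((Complex.I * (Δt : ℂ)) • H2)).mulVec
        ((NormedSpace.exp (Δt • H1)).mulVec (u m)))
    (v : ℕ → ℝ → Fin n → ℂ)
    (hv0 : ∀ p : ℝ, v 0 p = Real.exp (-|p|) • u0)
    (hv : ∀ (m : ℕ) (p : ℝ), v (m + 1) p =
      (NormedSpace.exp ((Complex.I * (Δt : ℂ)) • H2)).mulVec (T Δt (v m) p)) :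
    ∀ m : ℕ,
      (∫ p in Set.Ioi (0 : ℝ), (euclNorm (v m p)) ^ 2) / (∫ p : ℝ, (euclNorm (v m p)) ^ 2)
        = (1 / 2) * (euclNorm (u m) / euclNorm u0) ^ 2 := by
  intro m
  set E := NormedSpace.exp ((Complex.I * (Δt : ℂ)) • H2) with hE_def
  have hE : E ∈ Matrix.unitaryGroup (Fin n) ℂ := exp_unitary hH2 Δt
  have hQH : Qᴴ ∈ Matrix.unitaryGroup (Fin n) ℂ := by
    have := Unitary.star_mem hQ
    simpa [Matrix.star_eq_conjTranspose] using this
  have hExp1 : NormedSpace.exp (Δt • H1)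
      = Q * Matrix.diagonal (fun i => (Real.exp (Δt * l i) : ℂ)) * Qᴴ := by
    rw [hspec]; exact exp_smul_spec hQ Δt
  have hsmulC : ∀ (r : ℝ) (x : Fin n → ℂ), r • x = (r : ℂ) • x := by
    intro r x; funext j
    simp [Pi.smul_apply, Complex.real_smul, smul_eq_mul]
  have contMulVec : ∀ (M : Matrix (Fin n) (Fin n) ℂ) (f : ℝ → Fin n → ℂ),
      (∀ i, Continuous fun p => f p i) → ∀ i, Continuous fun p => M.mulVec (f p) i := by
    intro M f hf i
    simp only [Matrix.mulVec, dotProduct]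
    exact continuous_finset_sum _ fun j _ => continuous_const.mul (hf j)
  have hIoi_int : IntegrableOn (fun p : ℝ => Real.exp (-(2 * p))) (Set.Ioi 0) := by
    have h := exp_neg_integrableOn_Ioi (0 : ℝ) (show (0:ℝ) < 2 by norm_num)
    exact h.congr_fun (fun x _ => by ring_nf) measurableSet_Ioi
  have hIoi_val : ∫ p in Set.Ioi (0:ℝ), Real.exp (-(2 * p)) = 1 / 2 := by
    have h := integral_comp_mul_left_Ioi (fun x => Real.exp (-x)) 0 (show (0:ℝ) < 2 by norm_num)
    simp only [mul_zero, integral_exp_neg_Ioi_zero, smul_eq_mul, mul_one] at h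
    rw [show (fun p : ℝ => Real.exp (-(2 * p))) = fun x : ℝ => Real.exp (-(2 * x)) from rfl]
    rw [h]; norm_num
  have main : ∀ k, (∀ i, Continuous fun p => v k p i) ∧
      Integrable (fun p => euclNorm (v k p) ^ 2) ∧
      (∫ p : ℝ, euclNorm (v k p) ^ 2) = euclNorm u0 ^ 2 ∧
      ∀ p : ℝ, 0 ≤ p → v k p = Real.exp (-p) • u k := by
    intro k
    induction k with
    | zero =>
      have hpt0 : ∀ p : ℝ, euclNorm (v 0 p) ^ 2 = Real.exp (-(2 * |p|)) * euclNorm u0 ^ 2 := by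
        intro p
        rw [hv0, euclNorm_smul_real, exp_sq', show (2:ℝ) * -|p| = -(2 * |p|) by ring]
      refine ⟨?_, ?_, ?_, ?_⟩
      · intro i
        have heq : (fun p => v 0 p i) = fun p => Real.exp (-|p|) • u0 i := by
          funext p; rw [hv0]; rfl
        rw [heq]
        exact (Real.continuous_exp.comp continuous_abs.neg).smul continuous_const
      · exact ((integrable_comp_abs' hIoi_int).mul_const _).congr
          (ae_of_all _ fun p => (hpt0 p).symm)
      · calc (∫ p : ℝ, euclNorm (v 0 p) ^ 2)
            = ∫ p : ℝ, Real.exp (-(2 * |p|)) * euclNorm u0 ^ 2 :=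
              integral_congr_ae (ae_of_all _ hpt0)
          _ = 2 * ∫ p in Set.Ioi (0:ℝ), Real.exp (-(2 * p)) * euclNorm u0 ^ 2 :=
              integral_comp_abs (f := fun t => Real.exp (-(2 * t)) * euclNorm u0 ^ 2)
          _ = euclNorm u0 ^ 2 := by
              rw [integral_mul_const, hIoi_val]; ring
      · intro p hp
        rw [hv0, hu0', abs_of_nonneg hp]
    | succ k ih =>
      obtain ⟨hc, hint, htot, hform⟩ := ih
      have hg_cont : ∀ i : Fin n, Continuous fun p => ‖Qᴴ.mulVec (v k p) i‖ ^ 2 := fun i =>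
        (contMulVec Qᴴ (v k) hc i).norm.pow 2
      have hg_le : ∀ (i : Fin n) (p : ℝ),
          ‖Qᴴ.mulVec (v k p) i‖ ^ 2 ≤ euclNorm (v k p) ^ 2 := by
        intro i p
        rw [euclNorm_sq, ← sum_sq_mulVec hQH (v k p)]
        exact Finset.single_le_sum (f := fun j => ‖Qᴴ.mulVec (v k p) j‖ ^ 2)
          (fun j _ => sq_nonneg _) (Finset.mem_univ i)
      have hg_int : ∀ i : Fin n, Integrable fun p => ‖Qᴴ.mulVec (v k p) i‖ ^ 2 := by
        intro i
        refine hint.mono (hg_cont i).aestronglyMeasurable (ae_of_all _ fun p => ?_)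
        rw [Real.norm_eq_abs, Real.norm_eq_abs, abs_of_nonneg (sq_nonneg _),
          abs_of_nonneg (by positivity : (0:ℝ) ≤ euclNorm (v k p) ^ 2)]
        exact hg_le i p
      have hsh_int : ∀ i : Fin n,
          Integrable fun p => ‖Qᴴ.mulVec (v k (p - l i * Δt)) i‖ ^ 2 :=
        fun i => (hg_int i).comp_sub_right _
      have hpt : ∀ p, euclNorm (v (k+1) p) ^ 2
          = ∑ i, ‖Qᴴ.mulVec (v k (p - l i * Δt)) i‖ ^ 2 := by
        intro p
        rw [hv, euclNorm_sq, sum_sq_mulVec hE, hT, sum_sq_mulVec hQ]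
      refine ⟨?_, ?_, ?_, ?_⟩
      · intro i
        have heq : (fun p => v (k+1) p i) = fun p => E.mulVec (T Δt (v k) p) i := by
          funext p; rw [hv]
        rw [heq]
        refine contMulVec E (fun p => T Δt (v k) p) ?_ i
        intro j
        have heq2 : (fun p => T Δt (v k) p j)
            = fun p => Q.mulVec (fun r => Qᴴ.mulVec (v k (p - l r * Δt)) r) j := by
          funext p; rw [hT]
        rw [heq2]
        refine contMulVec Q _ ?_ j
        intro r
        exact contMulVec Qᴴ (fun p => v k (p - l r * Δt))
          (fun s => (hc s).comp (continuous_id.sub continuous_const)) r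
      · exact (integrable_finset_sum Finset.univ fun i _ => hsh_int i).congr
          (ae_of_all _ fun p => (hpt p).symm)
      · calc (∫ p : ℝ, euclNorm (v (k+1) p) ^ 2)
            = ∫ p : ℝ, ∑ i, ‖Qᴴ.mulVec (v k (p - l i * Δt)) i‖ ^ 2 :=
              integral_congr_ae (ae_of_all _ hpt)
          _ = ∑ i, ∫ p : ℝ, ‖Qᴴ.mulVec (v k (p - l i * Δt)) i‖ ^ 2 :=
              integral_finset_sum _ fun i _ => hsh_int i
          _ = ∑ i, ∫ p : ℝ, ‖Qᴴ.mulVec (v k p) i‖ ^ 2 :=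
              Finset.sum_congr rfl fun i _ =>
                integral_sub_right_eq_self (fun p => ‖Qᴴ.mulVec (v k p) i‖ ^ 2) _
          _ = ∫ p : ℝ, ∑ i, ‖Qᴴ.mulVec (v k p) i‖ ^ 2 :=
              (integral_finset_sum _ fun i _ => hg_int i).symm
          _ = ∫ p : ℝ, euclNorm (v k p) ^ 2 :=
              integral_congr_ae (ae_of_all _ fun p =>
                (sum_sq_mulVec hQH (v k p)).trans (euclNorm_sq (v k p)).symm)
          _ = euclNorm u0 ^ 2 := htot
      · intro p hp
        have hvec : (fun i => Qᴴ.mulVec (v k (p - l i * Δt)) i)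
            = fun i => (((Real.exp (-p) : ℝ) : ℂ) * ((Real.exp (Δt * l i) : ℝ) : ℂ))
                * Qᴴ.mulVec (u k) i := by
          funext i
          have hp' : 0 ≤ p - l i * Δt := by nlinarith [hneg i, hΔt.le]
          rw [hform _ hp', hsmulC, Matrix.mulVec_smul, Pi.smul_apply, smul_eq_mul,
            show ((Real.exp (-(p - l i * Δt)) : ℝ) : ℂ)
              = ((Real.exp (-p) : ℝ) : ℂ) * ((Real.exp (Δt * l i) : ℝ) : ℂ) by
                rw [← Complex.ofReal_mul, ← Real.exp_add]
                norm_num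
                ring_nf]
        have hdiag : (fun i => (((Real.exp (-p) : ℝ) : ℂ) * ((Real.exp (Δt * l i) : ℝ) : ℂ))
                * Qᴴ.mulVec (u k) i)
            = ((Real.exp (-p) : ℝ) : ℂ) •
              (Matrix.diagonal (fun i => ((Real.exp (Δt * l i) : ℝ) : ℂ))).mulVec
                (Qᴴ.mulVec (u k)) := by
          funext i
          rw [Pi.smul_apply, Matrix.mulVec_diagonal, smul_eq_mul]; ring
        have hassoc : Q.mulVec ((Matrix.diagonal fun i => ((Real.exp (Δt * l i) : ℝ) : ℂ)).mulVec
              (Qᴴ.mulVec (u k)))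
            = ((Q * Matrix.diagonal fun i => ((Real.exp (Δt * l i) : ℝ) : ℂ)) * Qᴴ).mulVec (u k) := by
          rw [Matrix.mulVec_mulVec, Matrix.mulVec_mulVec]
        rw [hv, hT, hvec, hdiag, Matrix.mulVec_smul, hassoc, ← hExp1,
          Matrix.mulVec_smul, ← hu, ← hsmulC]
  obtain ⟨-, hint, htot, hform⟩ := main m
  have hnum : ∫ p in Set.Ioi (0:ℝ), euclNorm (v m p) ^ 2 = euclNorm (u m) ^ 2 * (1/2) := by
    have hEq : Set.EqOn (fun p : ℝ => euclNorm (v m p) ^ 2)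
        (fun p : ℝ => Real.exp (-(2 * p)) * euclNorm (u m) ^ 2) (Set.Ioi 0) := by
      intro p hp
      simp only
      rw [hform p (le_of_lt hp), euclNorm_smul_real, exp_sq',
        show (2:ℝ) * -p = -(2 * p) by ring]
    rw [setIntegral_congr_fun measurableSet_Ioi hEq, integral_mul_const, hIoi_val]
    ring
  have hden : 0 < euclNorm u0 := by
    rcases Function.ne_iff.mp hu0 with ⟨i, hi⟩
    apply Real.sqrt_pos.mpr
    exact Finset.sum_pos' (fun j _ => sq_nonneg _)
      ⟨i, Finset.mem_univ i, pow_pos (norm_pos_iff.mpr hi) 2⟩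
  have h0 : euclNorm u0 ^ 2 ≠ 0 := by positivity
  rw [hnum, htot, div_pow]
  field_simp
  try ring
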